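/- Let E be a finite set with |E| = n, let M be an integer with 1 ≤ M < n, and let S be a random subset of E distributed uniformly over all M-element subsets of E. Let B and C be disjoint subsets of E with |B| = 2 and |C| = i where 1 ≤ i ≤ M − 2. Then Pr(C ⊆ S | B ⊆ S) ≤ Pr(C ⊆ S); equivalently, Pr(B ∪ C ⊆ S) ≤ Pr(B ⊆ S)·Pr(C ⊆ S). -/

import Mathlib

open Finset
open scoped Classical

noncomputable def prUnif {α : Type*} (E : Finset α) (M : ℕ) (P : Finset α → Prop) : ℝ :=
  (∑ S ∈ E.powersetCard M, if P S then (1 : ℝ) else 0) / (E.powersetCard M).card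

/-- Number of `M`-subsets of `E` containing a fixed `A ⊆ E` with `|A| ≤ M`. -/
lemma count_supersets {α : Type*} [DecidableEq α] (E A : Finset α) (M : ℕ)
    (hAE : A ⊆ E) (hAM : A.card ≤ M) :
    ((E.powersetCard M).filter (fun S => A ⊆ S)).card
      = (E.card - A.card).choose (M - A.card) := by
  rw [← Finset.card_sdiff_of_subset hAE, ← Finset.card_powersetCard]
  apply Finset.card_nbij' (fun S => S \ A) (fun T => T ∪ A)
  · intro S hS
    simp only [mem_coe, mem_filter, mem_powersetCard] at hS ⊢
    obtain ⟨⟨hSE, hScard⟩, hAS⟩ := hS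
    exact ⟨sdiff_subset_sdiff hSE le_rfl, by rw [Finset.card_sdiff_of_subset hAS, hScard]⟩
  · intro T hT
    simp only [mem_coe, mem_filter, mem_powersetCard] at hT ⊢
    obtain ⟨hTE, hTcard⟩ := hT
    have hdisj : Disjoint T A := Finset.sdiff_disjoint.mono_left hTE
    refine ⟨⟨?_, ?_⟩, Finset.subset_union_right⟩
    · exact Finset.union_subset (hTE.trans Finset.sdiff_subset) hAE
    · rw [Finset.card_union_of_disjoint hdisj, hTcard]
      omega
  · intro S hS
    simp only [mem_coe, mem_filter, mem_powersetCard] at hS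
    exact Finset.sdiff_union_of_subset hS.2
  · intro T hT
    simp only [mem_coe, mem_powersetCard] at hT
    have hdisj : Disjoint T A := Finset.sdiff_disjoint.mono_left hT.1
    beta_reduce
    rw [Finset.union_sdiff_right, Finset.sdiff_eq_self_of_disjoint hdisj]

lemma prUnif_subset {α : Type*} [DecidableEq α] (E A : Finset α) (M : ℕ)
    (hAE : A ⊆ E) (hAM : A.card ≤ M) :
    prUnif E M (fun S => A ⊆ S)
      = ((E.card - A.card).choose (M - A.card) : ℝ) / (E.card.choose M) := by
  unfold prUnif
  have hsum : (∑ S ∈ E.powersetCard M, if A ⊆ S then (1 : ℝ) else 0)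
      = (((E.powersetCard M).filter (fun S => A ⊆ S)).card : ℝ) :=
    (Finset.natCast_card_filter (fun S => A ⊆ S) _).symm
  congr 1
  · refine Eq.trans (Finset.sum_congr rfl fun S _ => ?_)
      (hsum.trans (by rw [count_supersets E A M hAE hAM]))
    by_cases h : A ⊆ S <;> simp [h]
  · rw [Finset.card_powersetCard]

lemma descFact_key (M n : ℕ) (h : M ≤ n) (i : ℕ) :
    M.descFactorial (i + 2) * n.descFactorial 2 * n.descFactorial i
      ≤ M.descFactorial 2 * M.descFactorial i * n.descFactorial (i + 2) := by
  induction i with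
  | zero => simp [Nat.descFactorial]
  | succ i ih =>
    have step : (M - (i + 2)) * (n - i) ≤ (M - i) * (n - (i + 2)) := by
      have e1 : M - (i + 2) = (M - i) - 2 := by omega
      have e2 : n - (i + 2) = (n - i) - 2 := by omega
      rw [e1, e2]
      set a := M - i with ha
      set b := n - i with hb
      have hab : a ≤ b := by omega
      rcases Nat.lt_or_ge a 2 with h2 | h2
      · have : a - 2 = 0 := by omega
        simp [this]
      · have e3 : (a - 2) * b = a * b - 2 * b := Nat.sub_mul a 2 b
        have e4 : a * (b - 2) = a * b - a * 2 := Nat.mul_sub a b 2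
        rw [e3, e4]
        have h2b : 2 * b ≤ a * b := Nat.mul_le_mul_right b h2
        have ha2 : a * 2 ≤ 2 * b := by nlinarith
        omega
    have key : M.descFactorial (i + 1 + 2) = (M - (i + 2)) * M.descFactorial (i + 2) := by
      rw [show i + 1 + 2 = (i + 2) + 1 by ring, Nat.descFactorial_succ]
    have key2 : n.descFactorial (i + 1 + 2) = (n - (i + 2)) * n.descFactorial (i + 2) := by
      rw [show i + 1 + 2 = (i + 2) + 1 by ring, Nat.descFactorial_succ]
    rw [key, key2, Nat.descFactorial_succ, Nat.descFactorial_succ]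
    calc (M - (i + 2)) * M.descFactorial (i + 2) * n.descFactorial 2 *
          ((n - i) * n.descFactorial i)
        = ((M - (i + 2)) * (n - i)) *
            (M.descFactorial (i + 2) * n.descFactorial 2 * n.descFactorial i) := by ring
      _ ≤ ((M - i) * (n - (i + 2))) *
            (M.descFactorial 2 * M.descFactorial i * n.descFactorial (i + 2)) :=
          Nat.mul_le_mul step ih
      _ = M.descFactorial 2 * ((M - i) * M.descFactorial i) *
            ((n - (i + 2)) * n.descFactorial (i + 2)) := by ring

lemma choose_key (M n : ℕ) (h : M ≤ n) (i : ℕ) :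
    M.choose (i + 2) * n.choose 2 * n.choose i
      ≤ M.choose 2 * M.choose i * n.choose (i + 2) := by
  have key := descFact_key M n h i
  rw [Nat.descFactorial_eq_factorial_mul_choose, Nat.descFactorial_eq_factorial_mul_choose,
    Nat.descFactorial_eq_factorial_mul_choose, Nat.descFactorial_eq_factorial_mul_choose,
    Nat.descFactorial_eq_factorial_mul_choose, Nat.descFactorial_eq_factorial_mul_choose] at key
  have hK : 0 < Nat.factorial (i + 2) * Nat.factorial 2 * Nat.factorial i := by
    exact Nat.mul_pos (Nat.mul_pos (Nat.factorial_pos _) (Nat.factorial_pos _)) (Nat.factorial_pos _)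
  refine Nat.le_of_mul_le_mul_left ?_ hK
  calc Nat.factorial (i + 2) * Nat.factorial 2 * Nat.factorial i * (M.choose (i + 2) * n.choose 2 * n.choose i)
      = Nat.factorial (i + 2) * M.choose (i + 2) * (Nat.factorial 2 * n.choose 2) * (Nat.factorial i * n.choose i) := by ring
    _ ≤ Nat.factorial 2 * M.choose 2 * (Nat.factorial i * M.choose i) * (Nat.factorial (i + 2) * n.choose (i + 2)) := key
    _ = Nat.factorial (i + 2) * Nat.factorial 2 * Nat.factorial i * (M.choose 2 * M.choose i * n.choose (i + 2)) := by ring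

/-- `C(n,M)·C(M,k) = C(n,k)·C(n-k,M-k)`. -/
lemma choose_id (n M k : ℕ) (hk : k ≤ M) (hM : M ≤ n) :
    n.choose M * M.choose k = n.choose k * (n - k).choose (M - k) := by
  have h1 := Nat.choose_mul_factorial_mul_factorial hM
  have h2 := Nat.choose_mul_factorial_mul_factorial hk
  have h3 := Nat.choose_mul_factorial_mul_factorial (hk.trans hM)
  have h4 := Nat.choose_mul_factorial_mul_factorial (Nat.sub_le_sub_right hM k)
  have h5 : n - k - (M - k) = n - M := by omega
  rw [h5] at h4
  have hF : 0 < Nat.factorial k * Nat.factorial (M - k) * Nat.factorial (n - M) :=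
    Nat.mul_pos (Nat.mul_pos (Nat.factorial_pos _) (Nat.factorial_pos _)) (Nat.factorial_pos _)
  apply Nat.eq_of_mul_eq_mul_right hF
  calc n.choose M * M.choose k * (Nat.factorial k * Nat.factorial (M - k) * Nat.factorial (n - M))
      = (M.choose k * Nat.factorial k * Nat.factorial (M - k)) * n.choose M * Nat.factorial (n - M) := by ring
    _ = Nat.factorial M * n.choose M * Nat.factorial (n - M) := by rw [h2]
    _ = n.choose M * Nat.factorial M * Nat.factorial (n - M) := by ring
    _ = Nat.factorial n := h1
    _ = n.choose k * Nat.factorial k * Nat.factorial (n - k) := h3.symm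
    _ = n.choose k * Nat.factorial k * ((n - k).choose (M - k) * Nat.factorial (M - k) * Nat.factorial (n - M)) := by rw [h4]
    _ = n.choose k * (n - k).choose (M - k) * (Nat.factorial k * Nat.factorial (M - k) * Nat.factorial (n - M)) := by ring

/-- Negative correlation in reservoir sampling: if `S` is a uniformly random `M`-element
subset of an `n`-element set `E` (with `1 ≤ M < n`), and `B, C ⊆ E` are disjoint with
`|B| = 2` and `|C| = i`, `1 ≤ i ≤ M - 2`, then `Pr(C ⊆ S | B ⊆ S) ≤ Pr(C ⊆ S)`;
equivalently, `Pr(B ∪ C ⊆ S) ≤ Pr(B ⊆ S)·Pr(C ⊆ S)`. -/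
theorem stmt17 {α : Type*} [DecidableEq α] (E B C : Finset α) (n M i : ℕ)
    (hE : E.card = n) (hM : 1 ≤ M) (hMn : M < n)
    (hBE : B ⊆ E) (hCE : C ⊆ E) (hdisj : Disjoint B C)
    (hB : B.card = 2) (hC : C.card = i) (hi1 : 1 ≤ i) (hiM : i ≤ M - 2) :
    prUnif E M (fun S => C ⊆ S ∧ B ⊆ S) / prUnif E M (fun S => B ⊆ S)
        ≤ prUnif E M (fun S => C ⊆ S)
    ∧ prUnif E M (fun S => B ∪ C ⊆ S)
        ≤ prUnif E M (fun S => B ⊆ S) * prUnif E M (fun S => C ⊆ S) := by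
  have hM3 : 3 ≤ M := by omega
  have hi2M : i + 2 ≤ M := by omega
  have hMn' : M ≤ n := hMn.le
  -- event equivalence
  have hev : prUnif E M (fun S => C ⊆ S ∧ B ⊆ S) = prUnif E M (fun S => B ∪ C ⊆ S) := by
    unfold prUnif
    congr 1
    refine Finset.sum_congr rfl fun S _ => ?_
    simp [Finset.union_subset_iff, and_comm]
  have hBC : (B ∪ C).card = i + 2 := by
    rw [Finset.card_union_of_disjoint hdisj, hB, hC]; omega
  have hBCE : B ∪ C ⊆ E := Finset.union_subset hBE hCE
  have prB := prUnif_subset E B M hBE (by omega)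
  have prC := prUnif_subset E C M hCE (by omega)
  have prBC := prUnif_subset E (B ∪ C) M hBCE (by omega)
  rw [hE, hB] at prB
  rw [hE, hC] at prC
  rw [hE, hBC] at prBC
  set N : ℕ := n.choose M with hN
  set p2 : ℕ := (n - 2).choose (M - 2) with hp2
  set pi' : ℕ := (n - i).choose (M - i) with hpi
  set pic : ℕ := (n - (i + 2)).choose (M - (i + 2)) with hpic
  -- key nat inequality : pic * N ≤ p2 * pi'
  have natkey : pic * N ≤ p2 * pi' := by
    have id2 : N * M.choose 2 = n.choose 2 * p2 := choose_id n M 2 (by omega) hMn'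
    have idi : N * M.choose i = n.choose i * pi' := choose_id n M i (by omega) hMn'
    have idic : N * M.choose (i + 2) = n.choose (i + 2) * pic :=
      choose_id n M (i + 2) hi2M hMn'
    have hX : 0 < n.choose 2 * n.choose i * n.choose (i + 2) :=
      Nat.mul_pos (Nat.mul_pos (Nat.choose_pos (by omega)) (Nat.choose_pos (by omega)))
        (Nat.choose_pos (by omega))
    apply Nat.le_of_mul_le_mul_right _ hX
    have ck := choose_key M n hMn' i
    calc pic * N * (n.choose 2 * n.choose i * n.choose (i + 2))
        = (n.choose (i + 2) * pic) * N * (n.choose 2 * n.choose i) := by ring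
      _ = (N * M.choose (i + 2)) * N * (n.choose 2 * n.choose i) := by rw [idic]
      _ = N * N * (M.choose (i + 2) * n.choose 2 * n.choose i) := by ring
      _ ≤ N * N * (M.choose 2 * M.choose i * n.choose (i + 2)) :=
          Nat.mul_le_mul_left _ ck
      _ = (N * M.choose 2) * (N * M.choose i) * n.choose (i + 2) := by ring
      _ = (n.choose 2 * p2) * (n.choose i * pi') * n.choose (i + 2) := by rw [id2, idi]
      _ = p2 * pi' * (n.choose 2 * n.choose i * n.choose (i + 2)) := by ring
  have hNpos : (0 : ℝ) < N := by exact_mod_cast Nat.choose_pos hMn'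
  have hp2pos : (0 : ℝ) < p2 := by
    exact_mod_cast Nat.choose_pos (show M - 2 ≤ n - 2 by omega)
  have natkeyR : (pic : ℝ) * N ≤ (p2 : ℝ) * pi' := by exact_mod_cast natkey
  have hpiNN : (0 : ℝ) ≤ pi' := by positivity
  constructor
  · rw [hev, prB, prC, prBC]
    have heq : (pic : ℝ) / N / ((p2 : ℝ) / N) = (pic : ℝ) / p2 := by
      field_simp
    rw [heq, div_le_div_iff₀ hp2pos hNpos]
    nlinarith
  · rw [prB, prC, prBC]
    rw [div_mul_div_comm, div_le_div_iff₀ hNpos (by positivity)]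
    nlinarith
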